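/- Let p_k = (k, k + 1/k) for k ∈ ℕ, k ≥ 1, and for each 0-1 sequence u let Dg_u be the persistence diagram {p_i : i ∈ supp(u)}. Then the set S = {Dg_u : u ∈ {0,1}^ℕ}, equipped with the 1-diagram distance d_1, is not a separable metric space. -/

import Mathlib

open scoped ENNReal

noncomputable section

/-- The point `p_k = (k, k + 1/k)`. -/
def pk (k : ℕ) : ℝ × ℝ := ((k : ℝ), (k : ℝ) + 1 / (k : ℝ))

/-- The `ℓ∞` distance of a point of the plane to the diagonal, as an extended real. -/
def distDeltaE (q : ℝ × ℝ) : ℝ≥0∞ := ENNReal.ofReal ((q.2 - q.1) / 2)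

/-- A partial matching between two (countable) diagrams given as sets of points:
a set of pairs contained in `D₁ × D₂` which is a partial bijection. -/
def IsPartialMatching (Γ : Set ((ℝ × ℝ) × (ℝ × ℝ))) (D₁ D₂ : Set (ℝ × ℝ)) : Prop :=
  (∀ pq ∈ Γ, pq.1 ∈ D₁ ∧ pq.2 ∈ D₂) ∧
    ∀ pq ∈ Γ, ∀ pq' ∈ Γ, (pq.1 = pq'.1 ↔ pq.2 = pq'.2)

/-- The `1`-cost of a partial matching: sum of the `ℓ∞` distances between matched
points plus the `ℓ∞` distances to the diagonal of unmatched points, valued in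
`[0, +∞]`.  (Note: `dist` on `ℝ × ℝ` is the `ℓ∞` distance.) -/
def cost1 (Γ : Set ((ℝ × ℝ) × (ℝ × ℝ))) (D₁ D₂ : Set (ℝ × ℝ)) : ℝ≥0∞ :=
  (∑' pq : Γ, ENNReal.ofReal (dist (pq : (ℝ × ℝ) × (ℝ × ℝ)).1
      (pq : (ℝ × ℝ) × (ℝ × ℝ)).2))
    + (∑' q : ↥(D₁ \ Prod.fst '' Γ), distDeltaE q)
    + (∑' q : ↥(D₂ \ Prod.snd '' Γ), distDeltaE q)

/-- The `1`-diagram distance between two (countable) diagrams, valued in `[0, +∞]`. -/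
def d1 (D₁ D₂ : Set (ℝ × ℝ)) : ℝ≥0∞ :=
  ⨅ (Γ : Set ((ℝ × ℝ) × (ℝ × ℝ))) (_ : IsPartialMatching Γ D₁ D₂), cost1 Γ D₁ D₂

/-- The diagram `Dg_u = {p_i : i ∈ supp u}` associated to a set `u` of indices. -/
def Dgu (u : Set ℕ) : Set (ℝ × ℝ) := pk '' u

/-- The set `S = {Dg_u : u a 0-1 sequence}` (supports consisting of indices `≥ 1`). -/
def Sdiag : Set (Set (ℝ × ℝ)) := {D | ∃ u : Set ℕ, (∀ k ∈ u, 1 ≤ k) ∧ D = Dgu u}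


namespace SdiagAux

def f (i : ℕ) : ℝ≥0∞ := ENNReal.ofReal (1 / (2 * i))

lemma pk_injective : Function.Injective pk := by
  intro i j h
  have h1 : (i : ℝ) = (j : ℝ) := congrArg Prod.fst h
  exact_mod_cast h1

lemma distDeltaE_pk (i : ℕ) : distDeltaE (pk i) = f i := by
  unfold distDeltaE pk f
  congr 1
  rcases eq_or_ne (i : ℝ) 0 with h | h
  · rw [h]; norm_num
  · field_simp; ring

lemma one_le_dist_pk {i j : ℕ} (h : i ≠ j) : 1 ≤ dist (pk i) (pk j) := by
  have h0 : ((i : ℤ) - j) ≠ 0 := by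
    intro hc
    exact h (by exact_mod_cast sub_eq_zero.mp hc)
  have h1 : (1 : ℝ) ≤ |(i : ℝ) - j| := by
    have := Int.one_le_abs h0
    have h2 : (1:ℝ) ≤ |((i:ℤ) - j : ℤ)| := by exact_mod_cast this
    rwa [Int.cast_abs, Int.cast_sub, Int.cast_natCast, Int.cast_natCast] at h2
  calc (1:ℝ) ≤ |(i:ℝ) - j| := h1
    _ = dist (pk i).1 (pk j).1 := by rw [Real.dist_eq]; rfl
    _ ≤ dist (pk i) (pk j) := by rw [Prod.dist_eq]; exact le_max_left _ _

lemma f_le_one {i : ℕ} : f i ≤ 1 := by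
  unfold f
  rw [← ENNReal.ofReal_one]
  apply ENNReal.ofReal_le_ofReal
  rcases Nat.eq_zero_or_pos i with h | h
  · simp [h]
  · rw [div_le_one (by positivity)]
    have : (1:ℝ) ≤ i := by exact_mod_cast h
    linarith

lemma finsum_le_tsum {ι κ : Type*} (F : Finset ι) (g : ι → κ) (hg : Set.InjOn g F)
    (f : ι → ℝ≥0∞) (h : κ → ℝ≥0∞) (hle : ∀ i ∈ F, f i ≤ h (g i)) :
    ∑ i ∈ F, f i ≤ ∑' k, h k := by
  classical
  calc ∑ i ∈ F, f i ≤ ∑ i ∈ F, h (g i) := Finset.sum_le_sum hle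
    _ = ∑ k ∈ F.image g, h k := (Finset.sum_image (fun a ha b hb hab => hg ha hb hab)).symm
    _ ≤ ∑' k, h k := ENNReal.sum_le_tsum _


lemma sum_le_cost_left {u w : Set ℕ} {Γ : Set ((ℝ × ℝ) × (ℝ × ℝ))}
    (hΓ : IsPartialMatching Γ (Dgu u) (Dgu w))
    (F : Finset ℕ) (hFu : ∀ i ∈ F, i ∈ u) (hFw : ∀ i ∈ F, i ∉ w) :
    ∑ i ∈ F, f i ≤ cost1 Γ (Dgu u) (Dgu w) := by
  classical
  set P : ℕ → Prop := fun i => pk i ∈ Prod.fst '' Γ with hP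
  rw [← Finset.sum_filter_add_sum_filter_not F P f]
  have hA : ∑ i ∈ F.filter P, f i ≤
      ∑' pq : Γ, ENNReal.ofReal (dist (pq : (ℝ × ℝ) × (ℝ × ℝ)).1
        (pq : (ℝ × ℝ) × (ℝ × ℝ)).2) := by
    rcases (F.filter P).eq_empty_or_nonempty with he | hne
    · simp [he]
    · obtain ⟨i₀, hi₀⟩ := hne
      have hΓne : ∃ pq₀ : Γ, True := by
        have : P i₀ := (Finset.mem_filter.mp hi₀).2
        obtain ⟨x, hx, _⟩ := this
        exact ⟨⟨x, hx⟩, trivial⟩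
      obtain ⟨pq₀, -⟩ := hΓne
      set g : ℕ → Γ := fun i =>
        if h : pk i ∈ Prod.fst '' Γ then ⟨h.choose, h.choose_spec.1⟩ else pq₀ with hg
      have hgfst : ∀ i, pk i ∈ Prod.fst '' Γ → ((g i : (ℝ × ℝ) × (ℝ × ℝ))).1 = pk i := by
        intro i hi
        simp only [hg, dif_pos hi]
        exact hi.choose_spec.2
      apply finsum_le_tsum (F.filter P) g
      · intro a ha b hb hab
        have hpa : P a := (Finset.mem_filter.mp ha).2
        have hpb : P b := (Finset.mem_filter.mp hb).2
        have : pk a = pk b := by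
          rw [← hgfst a hpa, ← hgfst b hpb, hab]
        exact pk_injective this
      · intro i hi
        have hpi : P i := (Finset.mem_filter.mp hi).2
        have hfst := hgfst i hpi
        have hmem : ((g i : (ℝ × ℝ) × (ℝ × ℝ))) ∈ Γ := (g i).2
        have hsnd : ((g i : (ℝ × ℝ) × (ℝ × ℝ))).2 ∈ Dgu w := (hΓ.1 _ hmem).2
        obtain ⟨j, hjw, hj⟩ := hsnd
        have hij : i ≠ j := fun h => hFw i (Finset.mem_filter.mp hi).1 (h ▸ hjw)
        calc f i ≤ 1 := f_le_one
          _ ≤ ENNReal.ofReal (dist ((g i : (ℝ × ℝ) × (ℝ × ℝ))).1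
                ((g i : (ℝ × ℝ) × (ℝ × ℝ))).2) := by
              rw [ENNReal.one_le_ofReal, hfst, ← hj]
              exact one_le_dist_pk hij
  have hB : ∑ i ∈ F.filter (fun i => ¬ P i), f i ≤
      ∑' q : ↥(Dgu u \ Prod.fst '' Γ), distDeltaE q := by
    rcases (F.filter (fun i => ¬ P i)).eq_empty_or_nonempty with he | hne
    · simp [he]
    · obtain ⟨i₀, hi₀⟩ := hne
      have hmem0 : pk i₀ ∈ Dgu u \ Prod.fst '' Γ :=
        ⟨⟨i₀, hFu i₀ (Finset.mem_filter.mp hi₀).1, rfl⟩, (Finset.mem_filter.mp hi₀).2⟩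
      set g : ℕ → ↥(Dgu u \ Prod.fst '' Γ) := fun i =>
        if h : pk i ∈ Dgu u \ Prod.fst '' Γ then ⟨pk i, h⟩ else ⟨pk i₀, hmem0⟩ with hg
      have hgval : ∀ i ∈ F.filter (fun i => ¬ P i), (g i : ℝ × ℝ) = pk i := by
        intro i hi
        have h : pk i ∈ Dgu u \ Prod.fst '' Γ :=
          ⟨⟨i, hFu i (Finset.mem_filter.mp hi).1, rfl⟩, (Finset.mem_filter.mp hi).2⟩
        simp only [hg, dif_pos h]
      apply finsum_le_tsum (F.filter (fun i => ¬ P i)) g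
      · intro a ha b hb hab
        apply pk_injective
        rw [← hgval a ha, ← hgval b hb, hab]
      · intro i hi
        rw [← distDeltaE_pk i]
        exact le_of_eq (by rw [hgval i hi])
  calc ∑ i ∈ F.filter P, f i + ∑ i ∈ F.filter (fun i => ¬ P i), f i
      ≤ (∑' pq : Γ, ENNReal.ofReal (dist (pq : (ℝ × ℝ) × (ℝ × ℝ)).1
          (pq : (ℝ × ℝ) × (ℝ × ℝ)).2))
        + (∑' q : ↥(Dgu u \ Prod.fst '' Γ), distDeltaE q) := add_le_add hA hB
    _ ≤ cost1 Γ (Dgu u) (Dgu w) := le_self_add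

lemma sum_le_cost_right {u w : Set ℕ} {Γ : Set ((ℝ × ℝ) × (ℝ × ℝ))}
    (hΓ : IsPartialMatching Γ (Dgu u) (Dgu w))
    (F : Finset ℕ) (hFw : ∀ i ∈ F, i ∈ w) (hFu : ∀ i ∈ F, i ∉ u) :
    ∑ i ∈ F, f i ≤ cost1 Γ (Dgu u) (Dgu w) := by
  classical
  set P : ℕ → Prop := fun i => pk i ∈ Prod.snd '' Γ with hP
  rw [← Finset.sum_filter_add_sum_filter_not F P f]
  have hA : ∑ i ∈ F.filter P, f i ≤
      ∑' pq : Γ, ENNReal.ofReal (dist (pq : (ℝ × ℝ) × (ℝ × ℝ)).1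
        (pq : (ℝ × ℝ) × (ℝ × ℝ)).2) := by
    rcases (F.filter P).eq_empty_or_nonempty with he | hne
    · simp [he]
    · obtain ⟨i₀, hi₀⟩ := hne
      have hΓne : ∃ pq₀ : Γ, True := by
        have : P i₀ := (Finset.mem_filter.mp hi₀).2
        obtain ⟨x, hx, _⟩ := this
        exact ⟨⟨x, hx⟩, trivial⟩
      obtain ⟨pq₀, -⟩ := hΓne
      set g : ℕ → Γ := fun i =>
        if h : pk i ∈ Prod.snd '' Γ then ⟨h.choose, h.choose_spec.1⟩ else pq₀ with hg
      have hgsnd : ∀ i, pk i ∈ Prod.snd '' Γ → ((g i : (ℝ × ℝ) × (ℝ × ℝ))).2 = pk i := by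
        intro i hi
        simp only [hg, dif_pos hi]
        exact hi.choose_spec.2
      apply finsum_le_tsum (F.filter P) g
      · intro a ha b hb hab
        have hpa : P a := (Finset.mem_filter.mp ha).2
        have hpb : P b := (Finset.mem_filter.mp hb).2
        have : pk a = pk b := by
          rw [← hgsnd a hpa, ← hgsnd b hpb, hab]
        exact pk_injective this
      · intro i hi
        have hpi : P i := (Finset.mem_filter.mp hi).2
        have hsnd := hgsnd i hpi
        have hmem : ((g i : (ℝ × ℝ) × (ℝ × ℝ))) ∈ Γ := (g i).2
        have hfst : ((g i : (ℝ × ℝ) × (ℝ × ℝ))).1 ∈ Dgu u := (hΓ.1 _ hmem).1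
        obtain ⟨j, hju, hj⟩ := hfst
        have hij : j ≠ i := fun h => hFu i (Finset.mem_filter.mp hi).1 (h ▸ hju)
        calc f i ≤ 1 := f_le_one
          _ ≤ ENNReal.ofReal (dist ((g i : (ℝ × ℝ) × (ℝ × ℝ))).1
                ((g i : (ℝ × ℝ) × (ℝ × ℝ))).2) := by
              rw [ENNReal.one_le_ofReal, hsnd, ← hj]
              exact one_le_dist_pk hij
  have hB : ∑ i ∈ F.filter (fun i => ¬ P i), f i ≤
      ∑' q : ↥(Dgu w \ Prod.snd '' Γ), distDeltaE q := by
    rcases (F.filter (fun i => ¬ P i)).eq_empty_or_nonempty with he | hne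
    · simp [he]
    · obtain ⟨i₀, hi₀⟩ := hne
      have hmem0 : pk i₀ ∈ Dgu w \ Prod.snd '' Γ :=
        ⟨⟨i₀, hFw i₀ (Finset.mem_filter.mp hi₀).1, rfl⟩, (Finset.mem_filter.mp hi₀).2⟩
      set g : ℕ → ↥(Dgu w \ Prod.snd '' Γ) := fun i =>
        if h : pk i ∈ Dgu w \ Prod.snd '' Γ then ⟨pk i, h⟩ else ⟨pk i₀, hmem0⟩ with hg
      have hgval : ∀ i ∈ F.filter (fun i => ¬ P i), (g i : ℝ × ℝ) = pk i := by
        intro i hi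
        have h : pk i ∈ Dgu w \ Prod.snd '' Γ :=
          ⟨⟨i, hFw i (Finset.mem_filter.mp hi).1, rfl⟩, (Finset.mem_filter.mp hi).2⟩
        simp only [hg, dif_pos h]
      apply finsum_le_tsum (F.filter (fun i => ¬ P i)) g
      · intro a ha b hb hab
        apply pk_injective
        rw [← hgval a ha, ← hgval b hb, hab]
      · intro i hi
        rw [← distDeltaE_pk i]
        exact le_of_eq (by rw [hgval i hi])
  calc ∑ i ∈ F.filter P, f i + ∑ i ∈ F.filter (fun i => ¬ P i), f i
      ≤ (∑' pq : Γ, ENNReal.ofReal (dist (pq : (ℝ × ℝ) × (ℝ × ℝ)).1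
          (pq : (ℝ × ℝ) × (ℝ × ℝ)).2))
        + (∑' q : ↥(Dgu w \ Prod.snd '' Γ), distDeltaE q) := add_le_add hA hB
    _ ≤ cost1 Γ (Dgu u) (Dgu w) := by
        rw [cost1, add_assoc]
        exact add_le_add le_rfl le_add_self

lemma sum_le_d1_left {u w : Set ℕ}
    (F : Finset ℕ) (hFu : ∀ i ∈ F, i ∈ u) (hFw : ∀ i ∈ F, i ∉ w) :
    ∑ i ∈ F, f i ≤ d1 (Dgu u) (Dgu w) :=
  le_iInf fun _ => le_iInf fun hΓ => sum_le_cost_left hΓ F hFu hFw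

lemma sum_le_d1_right {u w : Set ℕ}
    (F : Finset ℕ) (hFw : ∀ i ∈ F, i ∈ w) (hFu : ∀ i ∈ F, i ∉ u) :
    ∑ i ∈ F, f i ≤ d1 (Dgu u) (Dgu w) :=
  le_iInf fun _ => le_iInf fun hΓ => sum_le_cost_right hΓ F hFw hFu


lemma block_disj {i n m : ℕ} (h1 : i ∈ Finset.Ioc (4^n) (4^(n+1)))
    (h2 : i ∈ Finset.Ioc (4^m) (4^(m+1))) : n = m := by
  rw [Finset.mem_Ioc] at h1 h2
  by_contra h
  rcases Nat.lt_or_ge n m with hlt | hge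
  · have : 4^(n+1) ≤ 4^m := Nat.pow_le_pow_right (by norm_num) hlt
    omega
  · have hlt : m < n := by omega
    have : 4^(m+1) ≤ 4^n := Nat.pow_le_pow_right (by norm_num) hlt
    omega

lemma block_sum (n : ℕ) :
    ENNReal.ofReal (3/8) ≤ ∑ i ∈ Finset.Ioc (4^n) (4^(n+1)), f i := by
  have hcard : (Finset.Ioc (4^n) (4^(n+1))).card = 3 * 4^n := by
    rw [Nat.card_Ioc]
    ring_nf
    omega
  have h1 : (Finset.Ioc (4^n) (4^(n+1))).card • ENNReal.ofReal (1/(2*(4:ℝ)^(n+1))) ≤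
      ∑ i ∈ Finset.Ioc (4^n) (4^(n+1)), f i := by
    apply Finset.card_nsmul_le_sum
    intro i hi
    rw [Finset.mem_Ioc] at hi
    apply ENNReal.ofReal_le_ofReal
    have hipos : (0:ℝ) < i := by
      have h4 : 1 ≤ 4^n := Nat.one_le_pow _ _ (by norm_num)
      have : 1 ≤ i := by omega
      exact_mod_cast this
    apply one_div_le_one_div_of_le
    · linarith
    · have : (i : ℝ) ≤ (4:ℝ)^(n+1) := by exact_mod_cast hi.2
      linarith
  refine le_trans ?_ h1
  rw [hcard, nsmul_eq_mul]
  have : ((3 * 4^n : ℕ) : ℝ≥0∞) = ENNReal.ofReal ((3 * 4^n : ℕ) : ℝ) :=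
    (ENNReal.ofReal_natCast _).symm
  rw [this, ← ENNReal.ofReal_mul (by positivity)]
  apply ENNReal.ofReal_le_ofReal
  have h4 : (0:ℝ) < (4:ℝ)^n := by positivity
  have heq : (3:ℝ) * 4 ^ n * (1 / (2 * (4 ^ n * 4))) = 3/8 := by field_simp; ring
  push_cast
  rw [pow_succ, heq]


end SdiagAux

/-- The set `S = {Dg_u}` of diagrams built on the points `p_k = (k, k+1/k)`,
equipped with the `1`-diagram distance, is not separable: it admits no countable
subset `T` such that every element of `S` is at distance `< ε` of some element of `T`
for every `ε > 0`. -/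
theorem Sdiag_not_separable :
    ¬ ∃ T : Set (Set (ℝ × ℝ)), T ⊆ Sdiag ∧ T.Countable ∧
      ∀ D ∈ Sdiag, ∀ ε : ℝ≥0∞, 0 < ε → ∃ D' ∈ T, d1 D D' < ε := by
  classical
  rintro ⟨T, hTS, hTc, hT⟩
  set Bl : ℕ → Finset ℕ := fun n => Finset.Ioc (4^n) (4^(n+1)) with hBl
  set us : Set ℕ → Set ℕ := fun s => {i | ∃ n ∈ s, i ∈ Bl n} with hus
  have husS : ∀ s, Dgu (us s) ∈ Sdiag := by
    intro s
    refine ⟨us s, ?_, rfl⟩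
    rintro k ⟨n, -, hk⟩
    have h4 : 1 ≤ 4^n := Nat.one_le_pow _ _ (by norm_num)
    have := (Finset.mem_Ioc.mp hk).1
    omega
  have hεpos : (0:ℝ≥0∞) < ENNReal.ofReal (1/8) := ENNReal.ofReal_pos.mpr (by norm_num)
  choose D' hD'T hD'lt using fun s => hT (Dgu (us s)) (husS s) (ENNReal.ofReal (1/8)) hεpos
  have key : ∀ s t : Set ℕ, D' s = D' t → ∀ n, n ∈ s → n ∈ t := by
    intro s t hst n hns
    by_contra hnt
    obtain ⟨w, hw1, hwD⟩ := hTS (hD'T s)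
    have h1 : d1 (Dgu (us s)) (Dgu w) < ENNReal.ofReal (1/8) := by
      rw [← hwD]; exact hD'lt s
    have h2 : d1 (Dgu (us t)) (Dgu w) < ENNReal.ofReal (1/8) := by
      have h2' := hD'lt t
      rwa [← hst, hwD] at h2'
    set F1 := (Bl n).filter (fun i => i ∉ w) with hF1
    set F2 := (Bl n).filter (fun i => i ∈ w) with hF2
    have hb1 : ∑ i ∈ F1, SdiagAux.f i < ENNReal.ofReal (1/8) := by
      refine lt_of_le_of_lt (SdiagAux.sum_le_d1_left F1 ?_ ?_) h1
      · intro i hi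
        exact ⟨n, hns, (Finset.mem_filter.mp hi).1⟩
      · intro i hi
        exact (Finset.mem_filter.mp hi).2
    have hb2 : ∑ i ∈ F2, SdiagAux.f i < ENNReal.ofReal (1/8) := by
      refine lt_of_le_of_lt (SdiagAux.sum_le_d1_right F2 ?_ ?_) h2
      · intro i hi
        exact (Finset.mem_filter.mp hi).2
      · rintro i hi ⟨m, hmt, him⟩
        have : m = n := SdiagAux.block_disj him (Finset.mem_filter.mp hi).1
        exact hnt (this ▸ hmt)
    have hsplit : ∑ i ∈ F2, SdiagAux.f i + ∑ i ∈ F1, SdiagAux.f i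
        = ∑ i ∈ Bl n, SdiagAux.f i :=
      Finset.sum_filter_add_sum_filter_not (Bl n) (fun i => i ∈ w) SdiagAux.f
    have hlt : ENNReal.ofReal (3/8) < ENNReal.ofReal (1/8) + ENNReal.ofReal (1/8) :=
      lt_of_le_of_lt ((SdiagAux.block_sum n).trans hsplit.ge) (ENNReal.add_lt_add hb2 hb1)
    rw [← ENNReal.ofReal_add (by norm_num) (by norm_num)] at hlt
    have := (ENNReal.ofReal_lt_ofReal_iff (by norm_num)).mp hlt
    norm_num at this
  have hinj : Function.Injective D' := fun s t hst =>
    Set.ext fun n => ⟨key s t hst n, key t s hst.symm n⟩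
  have hctT : Countable ↥T := hTc.to_subtype
  obtain ⟨e, he⟩ := exists_injective_nat ↥T
  have hinj2 : Function.Injective (fun s : Set ℕ => e ⟨D' s, hD'T s⟩) := by
    intro s t h
    exact hinj (congrArg Subtype.val (he h))
  exact Function.cantor_injective _ hinj2


end
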